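/- With the query-graph setup of the context, let f : {1, …, N} → ℝ be an η⁻¹-admissible weighting function, and let (x, p) be a valid pair with t(x, p) > T − η. Then x is a correct query string, i.e., for every i: if x_i = 1 then z_i(x) ∉ N_i, and if x_i = 0 then z_i(x) ∉ Y_i. -/
import Mathlib


open scoped Classical

/-- With the query-graph setup (a DAG on `Fin N` in topological
order given by `pred`, completeness/soundness thresholds `β < α`,
`γ = (α+β)/2`, `η = (α−β)/2`, acceptance-probability functions `m i`, YES/NO
sets `Y i`/`Nn i`, an `η⁻¹`-admissible weighting function `f`, and the total
solution weight `t(x,p) = Σ_i f(i)·(x_i·p_i + (1−x_i)·γ)` over valid pairs with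
supremum `T`): if `(x, p)` is valid and `t(x,p) > T − η`, then `x` is a correct
query string, i.e. for every `i`, if `x_i = 1` then `z_i(x) ∉ N_i` and if
`x_i = 0` then `z_i(x) ∉ Y_i`.  Here `z_i(x) = x` restricted to `pred i`. -/
theorem stmt6 (N : ℕ) (pred : Fin N → Finset (Fin N))
    (hpred : ∀ i : Fin N, ∀ j ∈ pred i, j < i)
    (α β : ℝ) (hβ : 0 ≤ β) (hβα : β < α) (hα : α ≤ 1)
    (m : (i : Fin N) → (({j : Fin N // j ∈ pred i} → Bool) → ℝ))
    (hm0 : ∀ i z, 0 ≤ m i z) (hm1 : ∀ i z, m i z ≤ 1)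
    (Y Nn : (i : Fin N) → Set ({j : Fin N // j ∈ pred i} → Bool))
    (hYN : ∀ i, Disjoint (Y i) (Nn i))
    (hY : ∀ i z, z ∈ Y i → α ≤ m i z)
    (hN : ∀ i z, z ∈ Nn i → m i z ≤ β)
    (f : Fin N → ℝ)
    (hf : ∀ i : Fin N, f i ≥ 1 + ((α - β) / 2)⁻¹ *
        ∑ j ∈ Finset.univ.filter (fun j : Fin N => i ∈ pred j), f j)
    (x : Fin N → Bool) (p : Fin N → ℝ)
    (hp01 : ∀ i, 0 ≤ p i ∧ p i ≤ 1)
    (hvalid : ∀ i, p i ≤ m i (fun j => x j.1))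
    (hT : ∑ i, f i * (if x i then p i else (α + β) / 2)
        > sSup {r : ℝ | ∃ (x' : Fin N → Bool) (p' : Fin N → ℝ),
              (∀ i, 0 ≤ p' i ∧ p' i ≤ 1) ∧
              (∀ i, p' i ≤ m i (fun j => x' j.1)) ∧
              r = ∑ i, f i * (if x' i then p' i else (α + β) / 2)}
            - (α - β) / 2) :
    ∀ i : Fin N,
      (x i = true → (fun j : {j : Fin N // j ∈ pred i} => x j.1) ∉ Nn i) ∧
      (x i = false → (fun j : {j : Fin N // j ∈ pred i} => x j.1) ∉ Y i) := by
  have hηpos : (0:ℝ) < (α - β) / 2 := by linarith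
  set η : ℝ := (α - β) / 2 with hηdef
  set γ : ℝ := (α + β) / 2 with hγdef
  have hηne : η ≠ 0 := ne_of_gt hηpos
  have hγ0 : 0 ≤ γ := by rw [hγdef]; linarith
  have hγ1 : γ ≤ 1 := by rw [hγdef]; linarith
  -- all weights are at least 1
  have hfone : ∀ i : Fin N, (1:ℝ) ≤ f i := by
    have H : ∀ k, ∀ i : Fin N, N - (i : ℕ) ≤ k → 1 ≤ f i := by
      intro k
      induction k with
      | zero => intro i hi; exact absurd i.2 (by omega)
      | succ k ih =>
        intro i hi
        have hs : 0 ≤ ∑ j ∈ Finset.univ.filter (fun j : Fin N => i ∈ pred j), f j := by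
          refine Finset.sum_nonneg fun j hj => ?_
          have hij : (i : ℕ) < (j : ℕ) := hpred j i (Finset.mem_filter.mp hj).2
          have := ih j (by omega)
          linarith
        have h1 := hf i
        have h2 : 0 ≤ η⁻¹ * ∑ j ∈ Finset.univ.filter (fun j : Fin N => i ∈ pred j), f j :=
          mul_nonneg (inv_nonneg.mpr hηpos.le) hs
        linarith
    intro i; exact H N i (by omega)
  -- the feasible-value set is bounded above
  have hbdd : BddAbove {r : ℝ | ∃ (x' : Fin N → Bool) (p' : Fin N → ℝ),
      (∀ i, 0 ≤ p' i ∧ p' i ≤ 1) ∧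
      (∀ i, p' i ≤ m i (fun j => x' j.1)) ∧
      r = ∑ i, f i * (if x' i then p' i else γ)} := by
    refine ⟨∑ i, f i, fun r hr => ?_⟩
    obtain ⟨x', p', hp', -, rfl⟩ := hr
    refine Finset.sum_le_sum fun j _ => ?_
    have h0 : (0:ℝ) ≤ f j := by linarith [hfone j]
    calc f j * (if x' j then p' j else γ) ≤ f j * 1 := by
          apply mul_le_mul_of_nonneg_left _ h0
          split
          · exact (hp' j).2
          · exact hγ1
      _ = f j := mul_one _
  -- key step: flipping coordinate i with a gain of η contradicts near-optimality
  have key : ∀ (i : Fin N) (q : ℝ), 0 ≤ q → q ≤ 1 →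
      q ≤ m i (fun j => x j.1) →
      η ≤ (if x i then γ - p i else q - γ) → False := by
    intro i q hq0 hq1 hqm hgain
    set x' : Fin N → Bool := Function.update x i (!x i) with hx'
    set p' : Fin N → ℝ := fun j => if j = i then q else if i ∈ pred j then 0 else p j with hp'
    have hinotpred : i ∉ pred i := fun h => absurd (hpred i i h) (lt_irrefl i)
    have hzsame : ∀ j : Fin N, i ∉ pred j →
        (fun k : {k : Fin N // k ∈ pred j} => x' k.1) = (fun k => x k.1) := by
      intro j hj
      funext k
      have hk : k.1 ≠ i := fun h => hj (h ▸ k.2)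
      simp [hx', Function.update_of_ne hk]
    -- the flipped pair is feasible
    have hmem : (∑ j, f j * (if x' j then p' j else γ)) ∈ {r : ℝ | ∃ (x'' : Fin N → Bool) (p'' : Fin N → ℝ),
        (∀ i, 0 ≤ p'' i ∧ p'' i ≤ 1) ∧
        (∀ i, p'' i ≤ m i (fun j => x'' j.1)) ∧
        r = ∑ i, f i * (if x'' i then p'' i else γ)} := by
      refine ⟨x', p', fun j => ?_, fun j => ?_, rfl⟩
      · by_cases hji : j = i
        · simp [hp', hji, hq0, hq1]
        · by_cases hij : i ∈ pred j
          · simp [hp', hji, hij]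
          · simp [hp', hji, hij, hp01 j]
      · by_cases hji : j = i
        · subst hji
          have : p' j = q := by simp [hp']
          rw [this, hzsame j hinotpred]
          exact hqm
        · by_cases hij : i ∈ pred j
          · have : p' j = 0 := by simp [hp', hji, hij]
            rw [this]
            exact hm0 j _
          · have : p' j = p j := by simp [hp', hji, hij]
            rw [this, hzsame j hij]
            exact hvalid j
    have hle := le_csSup hbdd hmem
    -- pointwise lower bound on the change
    have hpt : ∀ j ∈ Finset.univ, (if j = i then f i * η else if i ∈ pred j then -f j else 0)
        ≤ f j * (if x' j then p' j else γ) - f j * (if x j then p j else γ) := by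
      intro j _
      by_cases hji : j = i
      · subst hji
        have hx'j : x' j = !x j := by simp [hx']
        have hp'j : p' j = q := by simp [hp']
        rw [if_pos rfl, hx'j, hp'j]
        cases hxj : x j
        · simp only [hxj, Bool.not_false, Bool.false_eq_true, if_true, if_false] at hgain ⊢
          nlinarith [hfone j]
        · simp only [hxj, Bool.not_true, Bool.false_eq_true, if_true, if_false] at hgain ⊢
          nlinarith [hfone j]
      · have hx'j : x' j = x j := by simp [hx', Function.update_of_ne hji]
        rw [if_neg hji, hx'j]
        by_cases hij : i ∈ pred j
        · have hp'j : p' j = 0 := by simp [hp', hji, hij]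
          rw [if_pos hij, hp'j]
          cases hxj : x j
          · simp only [Bool.false_eq_true, if_false]
            linarith [hfone j]
          · simp only [if_true]
            nlinarith [hfone j, (hp01 j).1, (hp01 j).2]
        · have hp'j : p' j = p j := by simp [hp', hji, hij]
          rw [if_neg hij, hp'j]
          simp
    have hsum := Finset.sum_le_sum hpt
    -- compute the lower-bound sum
    have hsplit : ∑ j : Fin N, (if j = i then f i * η else if i ∈ pred j then -f j else 0)
        = f i * η + ∑ j ∈ Finset.univ.erase i, (if i ∈ pred j then -f j else 0) := by
      rw [← Finset.add_sum_erase Finset.univ _ (Finset.mem_univ i)]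
      rw [if_pos rfl]
      congr 1
      refine Finset.sum_congr rfl fun j hj => ?_
      rw [if_neg (Finset.ne_of_mem_erase hj)]
    have hers : ∑ j ∈ Finset.univ.erase i, (if i ∈ pred j then -f j else 0)
        = -∑ j ∈ (Finset.univ.erase i).filter (fun j => i ∈ pred j), f j := by
      rw [← Finset.sum_neg_distrib, Finset.sum_filter]
    have hsub : ∑ j ∈ (Finset.univ.erase i).filter (fun j => i ∈ pred j), f j
        ≤ ∑ j ∈ Finset.univ.filter (fun j : Fin N => i ∈ pred j), f j := by
      refine Finset.sum_le_sum_of_subset_of_nonneg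
        (Finset.filter_subset_filter _ (Finset.erase_subset _ _)) fun j _ _ => ?_
      linarith [hfone j]
    have hadm : η + ∑ j ∈ Finset.univ.filter (fun j : Fin N => i ∈ pred j), f j ≤ f i * η := by
      have h3 := mul_le_mul_of_nonneg_right (hf i) hηpos.le
      have h4 : (1 + η⁻¹ * ∑ j ∈ Finset.univ.filter (fun j : Fin N => i ∈ pred j), f j) * η
          = η + ∑ j ∈ Finset.univ.filter (fun j : Fin N => i ∈ pred j), f j := by
        field_simp
      linarith [h3, h4.ge]
    rw [Finset.sum_sub_distrib] at hsum
    rw [hsplit, hers] at hsum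
    linarith
  intro i
  constructor
  · intro hxi hmem
    refine key i (p i) (hp01 i).1 (hp01 i).2 (hvalid i) ?_
    have h1 := hvalid i
    have h2 := hN i _ hmem
    rw [if_pos hxi]
    rw [hηdef, hγdef]
    linarith
  · intro hxi hmem
    refine key i (m i (fun j => x j.1)) (hm0 i _) (hm1 i _) le_rfl ?_
    have h2 := hY i _ hmem
    rw [if_neg (by simp [hxi])]
    rw [hηdef, hγdef]
    linarith
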